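/- arXiv:1911.00068 — 2 statements merged into one kernel-verified Lean document; each statement's English description precedes it below -/
import Mathlib

section
/- If for every example x with true label y* = j the predicted probability satisfies p̂(ỹ = i ; x) = p(ỹ = i | y* = j) (the ideal condition), then the per-class threshold t_i, defined as the average of p̂(ỹ = i ; x) over all examples x with noisy label ỹ = i, equals ∑_{j=1}^{m} p(ỹ = i | y* = j) · p(y* = j | ỹ = i). -/
open Finset

/-- Ideal Thresholds: under the ideal condition, the per-class threshold
(average self-confidence over examples with noisy label `i`) equals
`∑ j, p(ỹ=i | y*=j) · p(y*=j | ỹ=i)`, where the latter conditional is the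
empirical fraction of examples with noisy label `i` whose true label is `j`. -/
theorem ideal_thresholds {m : ℕ} {X : Type} [Fintype X]
    (noisy ystar : X → Fin m) (phat : X → Fin m → ℝ)
    (Q : Fin m → Fin m → ℝ)
    (hideal : ∀ x i, phat x i = Q i (ystar x))
    (hne : ∀ i : Fin m, (Finset.univ.filter (fun x => noisy x = i)).Nonempty) :
    ∀ i : Fin m,
      (∑ x ∈ Finset.univ.filter (fun x => noisy x = i), phat x i) /
          ((Finset.univ.filter (fun x => noisy x = i)).card : ℝ)
        = ∑ j : Fin m, Q i j *
            (((Finset.univ.filter (fun x => noisy x = i ∧ ystar x = j)).card : ℝ) /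
              ((Finset.univ.filter (fun x => noisy x = i)).card : ℝ)) := by
  intro i
  have key : (∑ x ∈ Finset.univ.filter (fun x => noisy x = i), phat x i)
      = ∑ j : Fin m, Q i j *
          ((Finset.univ.filter (fun x => noisy x = i ∧ ystar x = j)).card : ℝ) := by
    rw [← Finset.sum_fiberwise (Finset.univ.filter (fun x => noisy x = i)) ystar
        (fun x => phat x i)]
    refine Finset.sum_congr rfl fun j _ => ?_
    have : (Finset.univ.filter (fun x => noisy x = i)).filter (fun x => ystar x = j)
        = Finset.univ.filter (fun x => noisy x = i ∧ ystar x = j) := by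
      simp [Finset.filter_filter]
    rw [this]
    rw [Finset.sum_congr rfl (fun x hx => ?_), Finset.sum_const, nsmul_eq_mul, mul_comm]
    simp only [Finset.mem_filter] at hx
    rw [hideal, hx.2.2]
  rw [key, Finset.sum_div]
  exact Finset.sum_congr rfl fun j _ => (mul_div_assoc _ _ _)
end

section
/- (Per-Class Robustness) Let predicted probabilities be per-class diffracted: p̂(ỹ = j ; x) = ε_j^{(1)} · (p*(ỹ = j | y* = y*(x)) + ε_j^{(2)}) for real constants ε_j^{(1)} > 0 and ε_j^{(2)} depending only on class j. If there are no label collisions and each diagonal entry of Q_{ỹ|y*} maximizes its row, then the confident-joint bins computed from the diffracted probabilities equal the bins computed from the ideal probabilities, and both equal X_{ỹ=i, y*=j} for all i, j. -/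
open Finset

/-- (Per-Class Robustness) If predicted probabilities are per-class diffracted,
`p̂(ỹ=j; x) = ε₁ j * (p*(ỹ=j | y*=y*(x)) + ε₂ j)` with `ε₁ j > 0`, there are
no label collisions, and each diagonal entry of `Q` maximizes its row, then
the confident-joint bins computed from the diffracted probabilities equal
those computed from the ideal probabilities, and both equal the true
partition `{x : ỹ(x) = i ∧ y*(x) = j}`. -/
theorem per_class_robustness {m : ℕ} {X : Type} [Fintype X]
    (noisy ystar : X → Fin m) (phat : X → Fin m → ℝ)
    (Q : Fin m → Fin m → ℝ) (e1 e2 : Fin m → ℝ)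
    (hQnonneg : ∀ i j, 0 ≤ Q i j)
    (hQstoch : ∀ j, ∑ i : Fin m, Q i j = 1)
    (hne : ∀ j : Fin m, (Finset.univ.filter (fun x => noisy x = j)).Nonempty)
    (he1 : ∀ j, 0 < e1 j)
    (hdiff : ∀ x j, phat x j = e1 j * (Q j (ystar x) + e2 j))
    (hrow : ∀ j i, Q j i ≤ Q j j)
    (tD tI : Fin m → ℝ)
    (htD : ∀ j, tD j = (∑ x ∈ Finset.univ.filter (fun x => noisy x = j), phat x j) /
        ((Finset.univ.filter (fun x => noisy x = j)).card : ℝ))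
    (htI : ∀ j, tI j = (∑ x ∈ Finset.univ.filter (fun x => noisy x = j), Q j (ystar x)) /
        ((Finset.univ.filter (fun x => noisy x = j)).card : ℝ))
    (hnocollision : ∀ x : X, ∀ j k : Fin m,
        phat x j ≥ tD j → phat x k ≥ tD k → j = k) :
    ∀ i j : Fin m,
      ({x : X | noisy x = i ∧ phat x j ≥ tD j}
          = {x : X | noisy x = i ∧ Q j (ystar x) ≥ tI j}) ∧
      ({x : X | noisy x = i ∧ Q j (ystar x) ≥ tI j}
          = {x : X | noisy x = i ∧ ystar x = j}) := by
  have hcard : ∀ j : Fin m,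
      (0 : ℝ) < ((Finset.univ.filter (fun x => noisy x = j)).card : ℝ) := by
    intro j
    exact_mod_cast Finset.card_pos.mpr (hne j)
  -- tD j = e1 j * (tI j + e2 j)
  have htDI : ∀ j : Fin m, tD j = e1 j * (tI j + e2 j) := by
    intro j
    have hc := (hcard j).ne'
    rw [htD j, htI j]
    have hs : ∑ x ∈ Finset.univ.filter (fun x => noisy x = j), phat x j
        = e1 j * ((∑ x ∈ Finset.univ.filter (fun x => noisy x = j), Q j (ystar x))
            + ((Finset.univ.filter (fun x => noisy x = j)).card : ℝ) * e2 j) := by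
      rw [Finset.sum_congr rfl (fun x _ => hdiff x j), ← Finset.mul_sum,
        Finset.sum_add_distrib, Finset.sum_const, nsmul_eq_mul]
    rw [hs]
    field_simp
  -- equivalence of thresholds
  have hequiv : ∀ (x : X) (j : Fin m), phat x j ≥ tD j ↔ Q j (ystar x) ≥ tI j := by
    intro x j
    rw [hdiff x j, htDI j]
    constructor
    · intro h
      have := le_of_mul_le_mul_left h (he1 j)
      linarith
    · intro h
      have := he1 j
      nlinarith
  -- tI j ≤ Q j j
  have htIle : ∀ j : Fin m, tI j ≤ Q j j := by
    intro j
    rw [htI j]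
    rw [div_le_iff₀ (hcard j)]
    calc ∑ x ∈ Finset.univ.filter (fun x => noisy x = j), Q j (ystar x)
        ≤ ∑ _x ∈ Finset.univ.filter (fun x => noisy x = j), Q j j :=
          Finset.sum_le_sum (fun x _ => hrow j (ystar x))
      _ = Q j j * ((Finset.univ.filter (fun x => noisy x = j)).card : ℝ) := by
          rw [Finset.sum_const, nsmul_eq_mul]; ring
  intro i j
  have h1 : {x : X | noisy x = i ∧ phat x j ≥ tD j}
      = {x : X | noisy x = i ∧ Q j (ystar x) ≥ tI j} := by
    ext x; simp only [Set.mem_setOf_eq, hequiv x j]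
  refine ⟨h1, ?_⟩
  ext x
  simp only [Set.mem_setOf_eq]
  constructor
  · rintro ⟨hn, hq⟩
    refine ⟨hn, ?_⟩
    have hj : phat x j ≥ tD j := (hequiv x j).mpr hq
    have hk : phat x (ystar x) ≥ tD (ystar x) :=
      (hequiv x (ystar x)).mpr (le_trans (htIle (ystar x)) (le_refl _))
    exact (hnocollision x j (ystar x) hj hk).symm
  · rintro ⟨hn, hy⟩
    exact ⟨hn, by rw [hy]; exact htIle j⟩
end
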